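/- Let α, β, γ ∈ ℂ with |γ| = 1 and |β| ≥ η > 0, and suppose z₁, z₂ are the roots of γ z² + β z + α. If |α| ≤ δ where δ > 0 satisfies 2δ/η ≤ ε and 2δ/η < η/2, then the two roots have different absolute values and the root of smaller absolute value has modulus at most ε. -/

import Mathlib

/-- If `|γ| = 1`, `|β| ≥ η > 0`, `z₁, z₂` are the roots of `γ z² + β z + α` (via Vieta),
`|α| ≤ δ` where `δ > 0` satisfies `2δ/η ≤ ε` and `2δ/η < η/2`, then the roots have
different absolute values and the smaller root has modulus at most `ε`. -/
theorem stmt_2 (α β γ z₁ z₂ : ℂ) (η ε δ : ℝ) (hη : 0 < η) (hε : 0 < ε) (hδ : 0 < δ)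
    (hγ : ‖γ‖ = 1)
    (hβ : η ≤ ‖β‖)
    (hVieta1 : γ * (z₁ + z₂) = -β)
    (hVieta2 : γ * z₁ * z₂ = α)
    (hα : ‖α‖ ≤ δ)
    (h1 : 2 * δ / η ≤ ε) (h2 : 2 * δ / η < η / 2) :
    ‖z₁‖ ≠ ‖z₂‖ ∧
      min (‖z₁‖) (‖z₂‖) ≤ ε := by
  set a := ‖z₁‖ with ha
  set b := ‖z₂‖ with hb
  have hsum : η ≤ a + b := by
    have : ‖γ * (z₁ + z₂)‖ = ‖z₁ + z₂‖ := by
      rw [norm_mul, hγ, one_mul]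
    have h' : ‖z₁ + z₂‖ = ‖β‖ := by
      rw [← this, hVieta1, norm_neg]
    calc η ≤ ‖β‖ := hβ
      _ = ‖z₁ + z₂‖ := h'.symm
      _ ≤ a + b := norm_add_le _ _
  have hprod : a * b ≤ δ := by
    have : ‖γ * z₁ * z₂‖ = a * b := by
      rw [norm_mul, norm_mul, hγ, one_mul]
    rw [← this, hVieta2]; exact hα
  have hmax : η / 2 ≤ max a b := by
    by_contra h
    push_neg at h
    have := le_max_left a b
    have := le_max_right a b
    linarith [hsum]
  have hmaxpos : 0 < max a b := lt_of_lt_of_le (by linarith) hmax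
  have hminmax : min a b * max a b = a * b := min_mul_max a b
  have hminnn : 0 ≤ min a b := le_min (norm_nonneg z₁) (norm_nonneg z₂)
  have hmin : min a b ≤ 2 * δ / η := by
    rw [le_div_iff₀ hη]
    nlinarith [mul_nonneg hminnn (sub_nonneg.2 hmax)]
  have hlt : min a b < max a b := lt_of_le_of_lt hmin (lt_of_lt_of_le h2 hmax)
  refine ⟨fun h => ?_, le_trans hmin h1⟩
  rw [h, min_self, max_self] at hlt
  exact lt_irrefl _ hlt
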